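/- The number of ways to place m non-attacking rooks on the circular chained board B^∘_{n,k} equals the sum over all compositions (a_1,...,a_k) with a_1+...+a_k = m satisfying a_{i-1}+a_i ≤ n cyclically (a_0 = a_k) of the product over i from 1 to k of C(n - a_{i-1}, a_i) · (n)_{a_i}. -/

import Mathlib

/-- Non-attacking rook placement on the linear chained board `B⁻_{n,k}`:
rooks are triples (board, row, column). -/
def LinNonAtt (n k : ℕ) (R : Finset (Fin k × Fin n × Fin n)) : Prop :=
  (∀ r ∈ R, ∀ s ∈ R, r ≠ s → r.1 = s.1 → r.2.1 ≠ s.2.1 ∧ r.2.2 ≠ s.2.2) ∧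
  (∀ r ∈ R, ∀ s ∈ R, (r.1 : ℕ) + 1 = (s.1 : ℕ) → r.2.1 ≠ s.2.2)

/-- Non-attacking rook placement on the circular chained board `B°_{n,k}`. -/
def CircNonAtt (n k : ℕ) (R : Finset (Fin k × Fin n × Fin n)) : Prop :=
  (∀ r ∈ R, ∀ s ∈ R, r ≠ s → r.1 = s.1 → r.2.1 ≠ s.2.1 ∧ r.2.2 ≠ s.2.2) ∧
  (∀ r ∈ R, ∀ s ∈ R, ((r.1 : ℕ) + 1) % k = (s.1 : ℕ) → r.2.1 ≠ s.2.2)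

/-- Number of rooks of `R` on board `i`. -/
def bCount {n k : ℕ} (R : Finset (Fin k × Fin n × Fin n)) (i : Fin k) : ℕ :=
  (R.filter fun r => r.1 = i).card

/-- `a_{i-1}` with the convention `a_0 = 0` (linear case). -/
def prevL {k : ℕ} (a : Fin k → ℕ) (i : Fin k) : ℕ :=
  if i.val = 0 then 0
  else a ⟨i.val - 1, Nat.lt_of_le_of_lt (Nat.sub_le _ _) i.isLt⟩

/-- `a_{i-1}` with cyclic index convention (circular case). -/
def prevC {k : ℕ} (a : Fin k → ℕ) (i : Fin k) : ℕ :=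
  a ⟨(i.val + (k - 1)) % k, Nat.mod_lt _ i.pos⟩

open Finset

namespace CircRookAux

attribute [local instance] Classical.propDecidable

variable {n k : ℕ}

/-- cyclic predecessor index -/
def prevIdx {k : ℕ} (i : Fin k) : Fin k := ⟨(i.val + (k - 1)) % k, Nat.mod_lt _ i.pos⟩

lemma prevC_eq {k : ℕ} (a : Fin k → ℕ) (i : Fin k) : prevC a i = a (prevIdx i) := rfl

lemma next_prev (i : Fin k) : ((prevIdx i).val + 1) % k = i.val := by
  have hk : 0 < k := i.pos
  show ((i.val + (k - 1)) % k + 1) % k = i.val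
  rw [Nat.mod_add_mod]
  have h : i.val + (k - 1) + 1 = i.val + k := by omega
  rw [h, Nat.add_mod_right, Nat.mod_eq_of_lt i.isLt]

lemma prev_of_next {i j : Fin k} (h : ((i.val : ℕ) + 1) % k = j.val) : prevIdx j = i := by
  have hk : 0 < k := i.pos
  apply Fin.ext
  show (j.val + (k - 1)) % k = i.val
  rw [← h, Nat.mod_add_mod]
  have h2 : i.val + 1 + (k - 1) = i.val + k := by omega
  rw [h2, Nat.add_mod_right, Nat.mod_eq_of_lt i.isLt]

/-- rows used on board `i`. -/
def rowset (R : Finset (Fin k × Fin n × Fin n)) (i : Fin k) : Finset (Fin n) :=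
  (R.filter fun r => r.1 = i).image fun r => r.2.1

/-- columns used on board `i`. -/
def colset (R : Finset (Fin k × Fin n × Fin n)) (i : Fin k) : Finset (Fin n) :=
  (R.filter fun r => r.1 = i).image fun r => r.2.2

lemma card_eq_sum_bCount (R : Finset (Fin k × Fin n × Fin n)) :
    R.card = ∑ i, bCount R i := by
  classical
  simpa [bCount] using
    Finset.card_eq_sum_card_fiberwise (f := fun r : Fin k × Fin n × Fin n => r.1)
      (s := R) (t := univ) (fun x _ => mem_univ _)

lemma rowset_card {R : Finset (Fin k × Fin n × Fin n)} (hR : CircNonAtt n k R) (i : Fin k) :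
    (rowset R i).card = bCount R i := by
  apply Finset.card_image_of_injOn
  intro r hr s hs hrs
  by_contra hne
  have hr' := mem_filter.mp hr
  have hs' := mem_filter.mp hs
  exact (hR.1 r hr'.1 s hs'.1 hne (hr'.2.trans hs'.2.symm)).1 hrs

lemma colset_card {R : Finset (Fin k × Fin n × Fin n)} (hR : CircNonAtt n k R) (i : Fin k) :
    (colset R i).card = bCount R i := by
  apply Finset.card_image_of_injOn
  intro r hr s hs hrs
  by_contra hne
  have hr' := mem_filter.mp hr
  have hs' := mem_filter.mp hs
  exact (hR.1 r hr'.1 s hs'.1 hne (hr'.2.trans hs'.2.symm)).2 hrs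

lemma row_col_disj {R : Finset (Fin k × Fin n × Fin n)} (hR : CircNonAtt n k R) (i : Fin k) :
    Disjoint (rowset R (prevIdx i)) (colset R i) := by
  rw [Finset.disjoint_left]
  intro x hx hx'
  obtain ⟨r, hr, hr2⟩ := mem_image.mp hx
  obtain ⟨s, hs, hs2⟩ := mem_image.mp hx'
  have hr' := mem_filter.mp hr
  have hs' := mem_filter.mp hs
  have hnext : ((r.1 : ℕ) + 1) % k = (s.1 : ℕ) := by
    rw [hr'.2, hs'.2]; exact next_prev i
  exact hR.2 r hr'.1 s hs'.1 hnext (hr2.trans hs2.symm)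

/-- placement determined by rowsets `ρ` and column embeddings `σ`. -/
def toR (ρ : Fin k → Finset (Fin n))
    (σ : ∀ i : Fin k, ↥(ρ i) ↪ ↥((ρ (prevIdx i))ᶜ)) :
    Finset (Fin k × Fin n × Fin n) :=
  univ.biUnion fun i => (ρ i).attach.image fun r => (i, r.1, ((σ i) r).1)

lemma mem_toR {ρ : Fin k → Finset (Fin n)}
    {σ : ∀ i : Fin k, ↥(ρ i) ↪ ↥((ρ (prevIdx i))ᶜ)} {i : Fin k} {r c : Fin n} :
    (i, r, c) ∈ toR ρ σ ↔ ∃ h : r ∈ ρ i, (((σ i) ⟨r, h⟩ : Fin n)) = c := by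
  constructor
  · intro hx
    obtain ⟨j, -, hx⟩ := mem_biUnion.mp hx
    obtain ⟨s, -, hs⟩ := mem_image.mp hx
    simp only [Prod.mk.injEq] at hs
    obtain ⟨h1, h2, h3⟩ := hs
    subst h1; subst h2
    exact ⟨s.2, h3⟩
  · rintro ⟨h, rfl⟩
    exact mem_biUnion.mpr ⟨i, mem_univ _, mem_image.mpr ⟨⟨r, h⟩, mem_attach _ _, rfl⟩⟩

lemma filter_toR (ρ : Fin k → Finset (Fin n))
    (σ : ∀ i : Fin k, ↥(ρ i) ↪ ↥((ρ (prevIdx i))ᶜ)) (i : Fin k) :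
    (toR ρ σ).filter (fun r => r.1 = i) =
      (ρ i).attach.image fun r => (i, r.1, ((σ i) r).1) := by
  ext ⟨j, r, c⟩
  simp only [mem_filter, mem_image, mem_attach, true_and]
  constructor
  · rintro ⟨hm, rfl⟩
    obtain ⟨h, hc⟩ := mem_toR.mp hm
    exact ⟨⟨r, h⟩, by simp [hc]⟩
  · rintro ⟨s, hs⟩
    simp only [Prod.mk.injEq] at hs
    obtain ⟨h1, h2, h3⟩ := hs
    subst h1; subst h2; subst h3
    exact ⟨mem_toR.mpr ⟨s.2, rfl⟩, rfl⟩

lemma bCount_toR (ρ : Fin k → Finset (Fin n))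
    (σ : ∀ i : Fin k, ↥(ρ i) ↪ ↥((ρ (prevIdx i))ᶜ)) (i : Fin k) :
    bCount (toR ρ σ) i = (ρ i).card := by
  rw [bCount, filter_toR]
  rw [Finset.card_image_of_injOn]
  · exact Finset.card_attach
  · intro r _ s _ h
    simp only [Prod.mk.injEq] at h
    exact Subtype.ext h.2.1

lemma rowset_toR (ρ : Fin k → Finset (Fin n))
    (σ : ∀ i : Fin k, ↥(ρ i) ↪ ↥((ρ (prevIdx i))ᶜ)) (i : Fin k) :
    rowset (toR ρ σ) i = ρ i := by
  rw [rowset, filter_toR, Finset.image_image]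
  exact Finset.attach_image_val

lemma valid_toR (ρ : Fin k → Finset (Fin n))
    (σ : ∀ i : Fin k, ↥(ρ i) ↪ ↥((ρ (prevIdx i))ᶜ)) :
    CircNonAtt n k (toR ρ σ) := by
  constructor
  · rintro ⟨i, r₁, c₁⟩ hr ⟨j, r₂, c₂⟩ hs hne hij
    obtain rfl : i = j := hij
    obtain ⟨h₁, hc₁⟩ := mem_toR.mp hr
    obtain ⟨h₂, hc₂⟩ := mem_toR.mp hs
    have hrr : r₁ ≠ r₂ := by
      rintro rfl
      have hsub : (⟨r₁, h₁⟩ : {x // x ∈ ρ i}) = ⟨r₁, h₂⟩ := Subtype.ext rfl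
      have hcc : c₁ = c₂ := by rw [← hc₁, ← hc₂, hsub]
      exact hne (by rw [hcc])
    refine ⟨hrr, ?_⟩
    show c₁ ≠ c₂
    intro hcc
    have : ((σ i) ⟨r₁, h₁⟩ : ↥((ρ (prevIdx i))ᶜ)) = (σ i) ⟨r₂, h₂⟩ :=
      Subtype.ext (by rw [hc₁, hc₂, hcc])
    have := congrArg Subtype.val ((σ i).injective this)
    exact hrr this
  · rintro ⟨i, r₁, c₁⟩ hr ⟨j, r₂, c₂⟩ hs hij
    obtain ⟨h₁, -⟩ := mem_toR.mp hr
    obtain ⟨h₂, hc₂⟩ := mem_toR.mp hs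
    have hpj : prevIdx j = i := prev_of_next hij
    have hcmem : (((σ j) ⟨r₂, h₂⟩ : Fin n)) ∈ (ρ i)ᶜ := by
      rw [← hpj]; exact ((σ j) ⟨r₂, h₂⟩).2
    show r₁ ≠ c₂
    intro heq
    rw [hc₂, ← heq] at hcmem
    exact (mem_compl.mp hcmem) h₁

lemma fiber_card (m : ℕ) (a : Fin k → ℕ) (ρ : Fin k → Finset (Fin n))
    (hsum : ∑ i, a i = m) (hρ : ∀ i, (ρ i).card = a i) :
    ((univ.filter fun R : Finset (Fin k × Fin n × Fin n) =>
        (CircNonAtt n k R ∧ R.card = m) ∧ (fun i => bCount R i) = a).filter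
        fun R => (fun i => rowset R i) = ρ).card
      = ∏ i, Nat.descFactorial (n - a (prevIdx i)) (a i) := by
  classical
  have key : (Fintype.piFinset fun i : Fin k =>
        (univ : Finset (↥(ρ i) ↪ ↥((ρ (prevIdx i))ᶜ)))).card
      = ((univ.filter fun R : Finset (Fin k × Fin n × Fin n) =>
        (CircNonAtt n k R ∧ R.card = m) ∧ (fun i => bCount R i) = a).filter
        fun R => (fun i => rowset R i) = ρ).card := by
    apply Finset.card_bij (fun σ _ => toR ρ σ)
    · intro σ hσ
      simp only [mem_filter, mem_univ, true_and]
      refine ⟨⟨⟨valid_toR ρ σ, ?_⟩, ?_⟩, ?_⟩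
      · rw [card_eq_sum_bCount]
        simp only [bCount_toR, hρ]
        exact hsum
      · funext i; rw [bCount_toR, hρ]
      · funext i; exact rowset_toR ρ σ i
    · intro σ₁ h₁ σ₂ h₂ h
      funext i
      apply Function.Embedding.ext
      intro r
      have hm : (i, r.1, ((σ₁ i) r).1) ∈ toR ρ σ₂ := by
        rw [← h]; exact mem_toR.mpr ⟨r.2, rfl⟩
      obtain ⟨hh, hc⟩ := mem_toR.mp hm
      exact (Subtype.ext hc).symm
    · intro R hR
      simp only [mem_filter, mem_univ, true_and] at hR
      obtain ⟨⟨⟨hv, hm⟩, hb⟩, hrow⟩ := hR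
      have hrow' : ∀ i, rowset R i = ρ i := fun i => congrFun hrow i
      have hex : ∀ (i : Fin k) (r : Fin n), r ∈ ρ i → ∃ c, (i, r, c) ∈ R := by
        intro i r hr
        rw [← hrow'] at hr
        obtain ⟨x, hx, hx2⟩ := mem_image.mp hr
        have hxf := mem_filter.mp hx
        refine ⟨x.2.2, ?_⟩
        rw [← hxf.2, ← hx2]
        exact hxf.1
      have huniq : ∀ (i : Fin k) (r c c' : Fin n),
          (i, r, c) ∈ R → (i, r, c') ∈ R → c = c' := by
        intro i r c c' h1 h2
        by_contra hcc
        have hne : ((i, r, c) : Fin k × Fin n × Fin n) ≠ (i, r, c') := by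
          simp [Prod.ext_iff, hcc]
        exact (hv.1 _ h1 _ h2 hne rfl).1 rfl
      set col : ∀ i : Fin k, ↥(ρ i) → Fin n :=
        fun i r => (hex i r.1 r.2).choose with hcol
      have hcolmem : ∀ (i : Fin k) (r : ↥(ρ i)), (i, r.1, col i r) ∈ R :=
        fun i r => (hex i r.1 r.2).choose_spec
      have hcompl : ∀ (i : Fin k) (r : ↥(ρ i)), col i r ∈ (ρ (prevIdx i))ᶜ := by
        intro i r
        rw [mem_compl]
        intro hmem
        rw [← hrow' (prevIdx i)] at hmem
        obtain ⟨x, hx, hx2⟩ := mem_image.mp hmem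
        have hxf := mem_filter.mp hx
        have hnext : ((x.1 : ℕ) + 1) % k = (i : ℕ) := by
          rw [hxf.2]; exact next_prev i
        exact hv.2 x hxf.1 (i, r.1, col i r) (hcolmem i r) hnext hx2
      have hinj : ∀ i : Fin k, Function.Injective
          (fun r : ↥(ρ i) => (⟨col i r, hcompl i r⟩ : ↥((ρ (prevIdx i))ᶜ))) := by
        intro i r r' hrr
        have hval : col i r = col i r' := congrArg Subtype.val hrr
        have h1 := hcolmem i r
        have h2 := hcolmem i r'
        rw [hval] at h1
        by_contra hne
        have hne' : ((i, r.1, col i r') : Fin k × Fin n × Fin n) ≠ (i, r'.1, col i r') := by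
          intro hh
          apply hne
          exact Subtype.ext (congrArg (fun p : Fin k × Fin n × Fin n => p.2.1) hh)
        exact (hv.1 _ h1 _ h2 hne' rfl).2 rfl
      refine ⟨fun i => ⟨fun r => ⟨col i r, hcompl i r⟩, hinj i⟩,
        Fintype.mem_piFinset.mpr fun i => mem_univ _, ?_⟩
      ext ⟨i, r, c⟩
      constructor
      · intro h
        obtain ⟨hr, hc⟩ := mem_toR.mp h
        have := hcolmem i ⟨r, hr⟩
        simpa [← hc] using this
      · intro h
        have hrρ : r ∈ ρ i := by
          rw [← hrow']
          exact mem_image.mpr ⟨(i, r, c), mem_filter.mpr ⟨h, rfl⟩, rfl⟩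
        exact mem_toR.mpr ⟨hrρ, huniq i r _ c (hcolmem i ⟨r, hrρ⟩) h⟩
  rw [← key]
  simp [Fintype.card_piFinset, Fintype.card_embedding_eq, Fintype.card_coe, card_compl, hρ]

lemma step2 (m : ℕ) (a : Fin k → ℕ) (hsum : ∑ i, a i = m) :
    (univ.filter fun R : Finset (Fin k × Fin n × Fin n) =>
        (CircNonAtt n k R ∧ R.card = m) ∧ (fun i => bCount R i) = a).card
      = (∏ i, Nat.choose n (a i)) * ∏ i, Nat.descFactorial (n - a (prevIdx i)) (a i) := by
  classical
  rw [Finset.card_eq_sum_card_fiberwise (f := fun R i => rowset R i)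
      (t := Fintype.piFinset fun i : Fin k => (univ : Finset (Fin n)).powersetCard (a i)) ?_]
  · rw [Finset.sum_congr rfl fun ρ hρ => fiber_card m a ρ hsum
      (fun i => (mem_powersetCard.mp (Fintype.mem_piFinset.mp hρ i)).2)]
    rw [Finset.sum_const, Fintype.card_piFinset]
    simp [card_powersetCard, mul_comm]
  · intro R hR
    rw [Finset.mem_coe, mem_filter] at hR; rw [Finset.mem_coe]
    obtain ⟨-, ⟨hv, -⟩, hb⟩ := hR
    refine Fintype.mem_piFinset.mpr fun i => mem_powersetCard.mpr ⟨subset_univ _, ?_⟩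
    rw [rowset_card hv i]
    exact congrFun hb i

end CircRookAux

open CircRookAux in
/-- The number of placements of `m` non-attacking rooks on the circular chained board. -/
theorem circular_rook_count (n k m : ℕ) :
    Nat.card {R : Finset (Fin k × Fin n × Fin n) // CircNonAtt n k R ∧ R.card = m} =
      ∑ a ∈ (Fintype.piFinset fun _ : Fin k => Finset.range (n + 1)).filter
          (fun a => (∑ i, a i) = m ∧ ∀ i, prevC a i + a i ≤ n),
        ∏ i, Nat.choose (n - prevC a i) (a i) * Nat.descFactorial n (a i) := by
  classical
  have h1 : Nat.card {R : Finset (Fin k × Fin n × Fin n) // CircNonAtt n k R ∧ R.card = m}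
      = (univ.filter fun R : Finset (Fin k × Fin n × Fin n) =>
          CircNonAtt n k R ∧ R.card = m).card := by
    rw [Nat.card_eq_fintype_card, Fintype.card_subtype]
  rw [h1]
  rw [Finset.card_eq_sum_card_fiberwise (f := fun R i => bCount R i)
      (t := (Fintype.piFinset fun _ : Fin k => Finset.range (n + 1)).filter
        (fun a => (∑ i, a i) = m ∧ ∀ i, prevC a i + a i ≤ n)) ?_]
  · apply Finset.sum_congr rfl
    intro a ha
    rw [Finset.filter_filter, CircRookAux.step2 m a (mem_filter.mp ha).2.1]
    rw [← Finset.prod_mul_distrib]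
    apply Finset.prod_congr rfl
    intro i _
    rw [prevC_eq, Nat.descFactorial_eq_factorial_mul_choose,
      Nat.descFactorial_eq_factorial_mul_choose]
    ring
  · intro R hR
    rw [Finset.mem_coe, mem_filter] at hR
    obtain ⟨-, hv, hm⟩ := hR
    rw [Finset.mem_coe, mem_filter]
    refine ⟨Fintype.mem_piFinset.mpr fun i => ?_, ?_, fun i => ?_⟩
    · show bCount R i ∈ Finset.range (n + 1)
      rw [mem_range, Nat.lt_succ_iff, ← rowset_card hv i]
      exact (card_le_univ _).trans (le_of_eq (Fintype.card_fin n))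
    · exact (card_eq_sum_bCount R).symm.trans hm
    · show bCount R (prevIdx i) + bCount R i ≤ n
      rw [← rowset_card hv, ← colset_card hv i,
        ← Finset.card_union_of_disjoint (row_col_disj hv i)]
      exact (card_le_univ _).trans (le_of_eq (Fintype.card_fin n))
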